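/- Let P_{m+1} = {0,1,…,m+1} ⊆ ℝ with the induced metric, S = Y = {0, m+1} ⊆ P_{m+1}, and f : S → Y the identity map. Then every map F : P_{m+1} → Y extending f satisfies Lip(F) ≥ (m+1)·Lip(f). -/

import Mathlib

/-- **Sharpness of the bound `m+1`.**  Let `P = {0,1,…,m+1} ⊆ ℝ` and
`Y = {0, m+1}`.  Every map `F : P → Y` with `F 0 = 0` and `F (m+1) = m+1`
(i.e. extending the identity `f` on `{0, m+1}`, which has `Lip f = 1`)
has Lipschitz constant at least `(m+1) * Lip f = (m+1) * 1`. -/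
theorem extension_lower_bound_path
    (m : ℕ) (F : ℝ → ℝ)
    (hmaps : ∀ x ∈ {x : ℝ | ∃ k : ℕ, k ≤ m + 1 ∧ x = (k : ℝ)},
      F x ∈ ({0, ((m : ℝ) + 1)} : Set ℝ))
    (h0 : F 0 = 0) (h1 : F ((m : ℝ) + 1) = (m : ℝ) + 1)
    (L : ℝ)
    (hF : ∀ x ∈ {x : ℝ | ∃ k : ℕ, k ≤ m + 1 ∧ x = (k : ℝ)},
      ∀ y ∈ {x : ℝ | ∃ k : ℕ, k ≤ m + 1 ∧ x = (k : ℝ)},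
        |F x - F y| ≤ L * |x - y|) :
    ((m : ℝ) + 1) * 1 ≤ L := by
  have hmem : ∀ k : ℕ, k ≤ m + 1 → ((k : ℝ) ∈ {x : ℝ | ∃ k : ℕ, k ≤ m + 1 ∧ x = (k : ℝ)}) := by
    intro k hk; exact ⟨k, hk, rfl⟩
  -- there is an adjacent pair where F differs
  have key : ∃ k : ℕ, k ≤ m ∧ F k ≠ F (k + 1 : ℕ) := by
    by_contra h
    push_neg at h
    have hall : ∀ k : ℕ, k ≤ m + 1 → F k = 0 := by
      intro k hk
      induction k with
      | zero => simpa using h0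
      | succ n ih =>
          have hn : n ≤ m := Nat.lt_succ_iff.mp hk
          have := h n hn
          rw [← this]
          exact ih (Nat.le_succ_of_le hn)
    have := hall (m + 1) le_rfl
    rw [show ((m + 1 : ℕ) : ℝ) = (m : ℝ) + 1 by push_cast; ring] at this
    rw [h1] at this
    nlinarith [Nat.cast_nonneg (α := ℝ) m]
  obtain ⟨k, hk, hne⟩ := key
  have hk1 : (k : ℕ) ≤ m + 1 := Nat.le_succ_of_le hk
  have hk2 : (k + 1 : ℕ) ≤ m + 1 := Nat.succ_le_succ hk
  have hFk := hmaps _ (hmem k hk1)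
  have hFk1 := hmaps _ (hmem (k + 1) hk2)
  have hL := hF _ (hmem k hk1) _ (hmem (k + 1) hk2)
  have hdist : |((k : ℕ) : ℝ) - ((k + 1 : ℕ) : ℝ)| = 1 := by
    push_cast; rw [abs_sub_comm]; simp [abs_of_nonneg]
  rw [hdist, mul_one] at hL
  have habs : |F k - F (k + 1 : ℕ)| = (m : ℝ) + 1 := by
    rcases hFk with h1' | h1' <;> rcases hFk1 with h2' | h2' <;>
      (try simp only [Set.mem_singleton_iff] at *) <;>
      first
        | (exact absurd (h1'.trans h2'.symm) hne)
        | (rw [h1', h2', zero_sub, abs_neg, abs_of_nonneg (by positivity)])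
        | (rw [h1', h2', sub_zero, abs_of_nonneg (by positivity)])
  rw [habs] at hL
  linarith
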